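/- arXiv:2005.08311 — 2 statements merged into one kernel-verified Lean document; each statement's English description precedes it below -/
import Mathlib

section
/- If a holomorphic function $f$ on the open unit disc has power series $f(z) = \sum_{n=0}^\infty a_n z^n$, then $\int_{\mathbb{D}} |f|^2\, dA = \pi \sum_{n=0}^\infty \frac{|a_n|^2}{n+1}$ (with both sides possibly infinite). -/
open MeasureTheory Metric Complex Set
open scoped Real

set_option maxHeartbeats 1000000

lemma lintegral_ball_polar (g : ℂ → ENNReal) :
    ∫⁻ z in ball (0 : ℂ) 1, g z =
      ∫⁻ p in Ioo (0:ℝ) 1 ×ˢ Ioo (-π) π, ENNReal.ofReal p.1 * g (Complex.polarCoord.symm p) := by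
  set S : Set (ℝ × ℝ) := Ioo (0:ℝ) 1 ×ˢ Ioo (-π) π with hS
  have hSm : MeasurableSet S := measurableSet_Ioo.prod measurableSet_Ioo
  have hStarget : S ⊆ polarCoord.target := by
    rw [polarCoord_target]
    exact Set.prod_mono (Ioo_subset_Ioi_self) subset_rfl
  -- image of S under Complex.polarCoord.symm
  have himg : Complex.polarCoord.symm '' S = slitPlane ∩ ball (0:ℂ) 1 := by
    ext z
    constructor
    · rintro ⟨p, hp, rfl⟩
      refine ⟨Complex.polarCoord.symm_mapsTo (hStarget hp), ?_⟩
      rw [mem_ball_zero_iff,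
        Complex.norm_polarCoord_symm, abs_of_pos hp.1.1]
      exact hp.1.2
    · rintro ⟨hz, hz1⟩
      have hzt := Complex.polarCoord.map_source hz
      rw [Complex.polarCoord_target, Complex.polarCoord_apply, Set.mem_prod] at hzt
      refine ⟨Complex.polarCoord z, ?_, Complex.polarCoord.left_inv hz⟩
      rw [hS, Set.mem_prod, Complex.polarCoord_apply]
      exact ⟨⟨hzt.1, by simpa using mem_ball_zero_iff.mp hz1⟩, hzt.2⟩
  have hnull : volume {z : ℂ | z.im = 0} = 0 := by
    have : {z : ℂ | z.im = 0} = measurableEquivRealProd ⁻¹' (univ ×ˢ {0}) := by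
      ext z; simp [Complex.measurableEquivRealProd, eq_comm]
    rw [this, Complex.volume_preserving_equiv_real_prod.measure_preimage
      ((MeasurableSet.univ.prod (measurableSet_singleton 0)).nullMeasurableSet)]
    rw [Measure.volume_eq_prod, Measure.prod_prod]
    simp
  have hae : (slitPlane ∩ ball (0:ℂ) 1 : Set ℂ) =ᵐ[volume] ball (0:ℂ) 1 := by
    refine (ae_eq_set).2 ⟨?_, ?_⟩
    · refine measure_mono_null ?_ measure_empty
      rintro z ⟨⟨_, h1⟩, h2⟩; exact absurd h1 h2
    · refine measure_mono_null ?_ hnull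
      rintro z ⟨hz1, hz2⟩
      simp only [mem_inter_iff, not_and, mem_setOf_eq] at hz2 ⊢
      by_contra him
      exact (hz2 (Complex.mem_slitPlane_iff.2 (Or.inr him))) hz1
  rw [← setLIntegral_congr hae, ← himg]
  have himg2 : (Complex.polarCoord.symm '' S : Set ℂ)
      = Complex.measurableEquivRealProd.symm '' (polarCoord.symm '' S) := by
    rw [Set.image_image]; rfl
  rw [himg2, ← MeasurePreserving.setLIntegral_comp_emb
    (Complex.volume_preserving_equiv_real_prod.symm)
    Complex.measurableEquivRealProd.symm.measurableEmbedding g _]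
  set B : ℝ × ℝ → ℝ × ℝ →L[ℝ] ℝ × ℝ := fun p =>
    LinearMap.toContinuousLinearMap (Matrix.toLin (Module.Basis.finTwoProd ℝ) (Module.Basis.finTwoProd ℝ)
      !![Real.cos p.2, -p.1 * Real.sin p.2; Real.sin p.2, p.1 * Real.cos p.2]) with hB
  have B_det : ∀ p, (B p).det = p.1 := by
    intro p
    conv_rhs => rw [← one_mul p.1, ← Real.cos_sq_add_sin_sq p.2]
    simp only [hB, neg_mul, LinearMap.det_toContinuousLinearMap, LinearMap.det_toLin,
      Matrix.det_fin_two_of, sub_neg_eq_add]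
    ring
  have A : ∀ p ∈ S, HasFDerivWithinAt polarCoord.symm (B p) S p := fun p _ =>
    (hasFDerivAt_polarCoord_symm p).hasFDerivWithinAt
  have hinj : Set.InjOn polarCoord.symm S := polarCoord.symm.injOn.mono hStarget
  rw [lintegral_image_eq_lintegral_abs_det_fderiv_mul volume hSm A hinj]
  refine setLIntegral_congr_fun hSm (fun p hp => ?_)
  rw [B_det, abs_of_pos hp.1.1]
  rfl
lemma integral_exp_int_mul (k : ℤ) (hk : k ≠ 0) :
    ∫ θ in (-π)..π, Complex.exp ((k : ℂ) * θ * I) = 0 := by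
  have hc : (k : ℂ) * I ≠ 0 := by
    simp [Complex.ext_iff, hk]
  have h : ∀ θ : ℝ, (k : ℂ) * θ * I = ((k : ℂ) * I) * θ := by intro θ; ring
  simp_rw [h]
  rw [integral_exp_mul_complex hc]
  have e1 : (k : ℂ) * I * π = ((k * π : ℝ) : ℂ) * I := by push_cast; ring
  have e2 : (k : ℂ) * I * (-π : ℝ) = ((-(k * π) : ℝ) : ℂ) * I := by push_cast; ring
  rw [e1, e2, Complex.exp_mul_I, Complex.exp_mul_I]
  rw [← Complex.ofReal_cos, ← Complex.ofReal_sin, ← Complex.ofReal_cos, ← Complex.ofReal_sin]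
  rw [Real.sin_int_mul_pi, Real.cos_neg, Real.sin_neg, Real.sin_int_mul_pi]
  simp

lemma summable_norm_coeff {a : ℕ → ℂ} {f : ℂ → ℂ}
    (hf : ∀ z ∈ ball (0 : ℂ) 1, HasSum (fun n : ℕ => a n * z ^ n) (f z))
    {r : ℝ} (hr0 : 0 ≤ r) (hr1 : r < 1) :
    Summable (fun n => ‖a n‖ * r ^ n) := by
  set ρ : ℝ := (1 + r) / 2 with hρ
  have hρr : r < ρ := by rw [hρ]; linarith
  have hρ1 : ρ < 1 := by rw [hρ]; linarith
  have hρ0 : 0 < ρ := by linarith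
  have hz : (ρ : ℂ) ∈ ball (0 : ℂ) 1 := by
    simp [mem_ball_zero_iff, abs_of_pos hρ0, hρ1]
  have hsum := (hf _ hz).summable
  have htend : Filter.Tendsto (fun n => ‖a n * (ρ:ℂ) ^ n‖) Filter.atTop (nhds 0) :=
    by simpa using hsum.tendsto_atTop_zero.norm
  obtain ⟨C, hC⟩ := htend.bddAbove_range
  refine Summable.of_nonneg_of_le (fun n => by positivity)
    (fun n => ?_) ((summable_geometric_of_lt_one (by positivity)
      (by rw [div_lt_one hρ0]; exact hρr) : Summable fun n => (r/ρ)^n).mul_left C)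
  have h1 : ‖a n * (ρ:ℂ) ^ n‖ ≤ C := hC ⟨n, rfl⟩
  have h2 : ‖a n * (ρ:ℂ) ^ n‖ = ‖a n‖ * ρ ^ n := by
    simp [norm_mul, norm_pow, abs_of_pos hρ0]
  calc ‖a n‖ * r ^ n = (‖a n‖ * ρ ^ n) * (r / ρ) ^ n := by
        rw [mul_assoc, ← mul_pow, mul_div_cancel₀ _ hρ0.ne']
    _ ≤ C * (r / ρ) ^ n := by
        apply mul_le_mul_of_nonneg_right (h2 ▸ h1) (by positivity)

lemma continuousOn_f {a : ℕ → ℂ} {f : ℂ → ℂ}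
    (hf : ∀ z ∈ ball (0 : ℂ) 1, HasSum (fun n : ℕ => a n * z ^ n) (f z)) :
    ContinuousOn f (ball (0 : ℂ) 1) := by
  intro z₀ hz₀
  have hz₀n : ‖z₀‖ < 1 := mem_ball_zero_iff.mp hz₀
  set r : ℝ := (1 + ‖z₀‖) / 2 with hr
  have hr1 : r < 1 := by rw [hr]; linarith
  have hr0 : 0 ≤ r := by positivity
  have hz₀r : z₀ ∈ ball (0:ℂ) r := by rw [mem_ball_zero_iff]; rw [hr]; linarith
  have hsub : ball (0:ℂ) r ⊆ ball (0:ℂ) 1 := ball_subset_ball (by linarith)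
  have hct : ContinuousOn (fun z : ℂ => ∑' n : ℕ, a n * z ^ n) (ball (0:ℂ) r) := by
    refine continuousOn_tsum (fun n => (continuous_const.mul (continuous_pow n)).continuousOn)
      (summable_norm_coeff hf hr0 hr1) (fun n x hx => ?_)
    rw [norm_mul, norm_pow]
    exact mul_le_mul_of_nonneg_left
      (pow_le_pow_left₀ (norm_nonneg x) (le_of_lt (mem_ball_zero_iff.mp hx)) n) (norm_nonneg _)
  have heq : ContinuousOn f (ball (0:ℂ) r) :=
    hct.congr (fun z hz => ((hf z (hsub hz)).tsum_eq).symm)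
  exact (heq.continuousAt (isOpen_ball.mem_nhds hz₀r)).continuousWithinAt

lemma circle_parseval {a : ℕ → ℂ} {f : ℂ → ℂ}
    (hf : ∀ z ∈ ball (0 : ℂ) 1, HasSum (fun n : ℕ => a n * z ^ n) (f z))
    {ρ : ℝ} (hρ0 : 0 < ρ) (hρ1 : ρ < 1) :
    ∫ θ in Ioo (-π) π, ‖f ((ρ : ℂ) * Complex.exp (θ * I))‖ ^ 2
      = (2 * π) * ∑' n : ℕ, ‖a n‖ ^ 2 * ρ ^ (2 * n) := by
  set z : ℝ → ℂ := fun θ => (ρ : ℂ) * Complex.exp (θ * I) with hzdef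
  have hznorm : ∀ θ, ‖z θ‖ = ρ := by
    intro θ
    rw [hzdef]
    simp [norm_mul, Complex.norm_exp_ofReal_mul_I, abs_of_pos hρ0]
  have hzb : ∀ θ, z θ ∈ ball (0 : ℂ) 1 := fun θ => by
    rw [mem_ball_zero_iff, hznorm]; exact hρ1
  have hcz : Continuous z := by continuity
  have hcfz : Continuous (fun θ => f (z θ)) :=
    (continuousOn_f hf).comp_continuous hcz hzb
  set c : ℕ → ℝ := fun n => ‖a n‖ * ρ ^ n with hcdef
  have hc : Summable c := summable_norm_coeff hf hρ0.le hρ1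
  have hcnn : ∀ n, 0 ≤ c n := fun n => by positivity
  set g : ℕ × ℕ → ℝ → ℂ :=
    fun mn θ => (a mn.1 * z θ ^ mn.1) * ((starRingEnd ℂ) (a mn.2) * (starRingEnd ℂ) (z θ) ^ mn.2)
    with hgdef
  have hnormterm : ∀ n θ, ‖a n * z θ ^ n‖ = c n := by
    intro n θ; rw [norm_mul, norm_pow, hznorm]
  have hnormterm' : ∀ n θ, ‖(starRingEnd ℂ) (a n) * (starRingEnd ℂ) (z θ) ^ n‖ = c n := by
    intro n θ
    rw [norm_mul, norm_pow, RCLike.norm_conj, RCLike.norm_conj, hznorm]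
  -- pointwise HasSum of the double series
  have B1 : ∀ θ, HasSum (fun mn => g mn θ) (f (z θ) * (starRingEnd ℂ) (f (z θ))) := by
    intro θ
    simp only [hgdef]
    have h1 := hf (z θ) (hzb θ)
    have h2 : HasSum (fun n => (starRingEnd ℂ) (a n) * (starRingEnd ℂ) (z θ) ^ n)
        ((starRingEnd ℂ) (f (z θ))) := by
      have := h1.map (starRingEnd ℂ) (Complex.continuous_conj)
      simpa [Function.comp_def, map_mul, map_pow] using this
    have hs1 : Summable (fun n => ‖a n * z θ ^ n‖) := by
      simp only [hnormterm]; exact hc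
    have hs2 : Summable (fun n => ‖(starRingEnd ℂ) (a n) * (starRingEnd ℂ) (z θ) ^ n‖) := by
      simp only [hnormterm']; exact hc
    exact HasSum.mul (f := fun n : ℕ => a n * z θ ^ n)
      (g := fun n : ℕ => (starRingEnd ℂ) (a n) * (starRingEnd ℂ) (z θ) ^ n) h1 h2
      (summable_mul_of_summable_norm (f := fun n : ℕ => a n * z θ ^ n)
        (g := fun n : ℕ => (starRingEnd ℂ) (a n) * (starRingEnd ℂ) (z θ) ^ n) hs1 hs2)
  -- measurability / integrability
  have hgc : ∀ mn : ℕ × ℕ, Continuous (g mn) := by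
    intro mn
    apply Continuous.mul
    · exact continuous_const.mul (hcz.pow _)
    · exact continuous_const.mul ((Complex.continuous_conj.comp hcz).pow _)
  -- norm of each term is constant
  have hgnorm : ∀ mn θ, ‖g mn θ‖ = c mn.1 * c mn.2 := by
    intro mn θ; rw [hgdef]; simp only [norm_mul]
    rw [← norm_mul, ← norm_mul, hnormterm, hnormterm']
  have hcc : Summable (fun mn : ℕ × ℕ => c mn.1 * c mn.2) :=
    hc.mul_of_nonneg hc hcnn hcnn
  -- swap integral and sum
  have B2 : ∫ θ in Ioo (-π) π, f (z θ) * (starRingEnd ℂ) (f (z θ))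
      = ∑' mn : ℕ × ℕ, ∫ θ in Ioo (-π) π, g mn θ := by
    rw [show (fun θ => f (z θ) * (starRingEnd ℂ) (f (z θ))) = fun θ => ∑' mn : ℕ × ℕ, g mn θ
      from funext fun θ => ((B1 θ).tsum_eq).symm]
    refine integral_tsum (fun mn => (hgc mn).aestronglyMeasurable) ?_
    have : ∀ mn : ℕ × ℕ, ∫⁻ θ in Ioo (-π) π, ‖g mn θ‖ₑ
        = ENNReal.ofReal (c mn.1 * c mn.2) * ENNReal.ofReal (2 * π) := by
      intro mn
      have : (fun θ : ℝ => (‖g mn θ‖ₑ : ENNReal)) = fun _ => ENNReal.ofReal (c mn.1 * c mn.2) := by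
        funext θ
        rw [← ofReal_norm_eq_enorm, hgnorm]
      rw [this, setLIntegral_const, Real.volume_Ioo]
      congr 2
      ring
    rw [tsum_congr this, ENNReal.tsum_mul_right,
      ← ENNReal.ofReal_tsum_of_nonneg (fun mn => mul_nonneg (hcnn _) (hcnn _)) hcc]
    exact (ENNReal.mul_lt_top ENNReal.ofReal_lt_top ENNReal.ofReal_lt_top).ne
  -- value of each integral
  have B3 : ∀ mn : ℕ × ℕ, ∫ θ in Ioo (-π) π, g mn θ
      = if mn.1 = mn.2 then ((2 * π : ℝ) : ℂ) * ((‖a mn.2‖ ^ 2 : ℝ) : ℂ) * (ρ : ℂ) ^ (2 * mn.2)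
        else 0 := by
    rintro ⟨m, n⟩
    have hzconj : ∀ θ : ℝ, (starRingEnd ℂ) (z θ) = (ρ : ℂ) * Complex.exp (-(θ * I)) := by
      intro θ
      rw [hzdef]
      simp only [map_mul, ← Complex.exp_conj]
      norm_num
    have gval : ∀ θ : ℝ, g (m, n) θ
        = (a m * (starRingEnd ℂ) (a n) * (ρ : ℂ) ^ (m + n))
            * Complex.exp ((((m : ℤ) - n : ℤ) : ℂ) * θ * I) := by
      intro θ
      rw [hgdef]
      simp only [hzconj]
      simp only [hzdef]
      rw [mul_pow, mul_pow, ← Complex.exp_nat_mul, ← Complex.exp_nat_mul]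
      have hexp : Complex.exp ((m:ℂ) * ((θ:ℂ) * I)) * Complex.exp ((n:ℂ) * -((θ:ℂ) * I))
          = Complex.exp ((((m:ℤ) - n : ℤ):ℂ) * θ * I) := by
        rw [← Complex.exp_add]; congr 1; push_cast; ring
      calc a m * ((ρ:ℂ)^m * Complex.exp ((m:ℂ) * ((θ:ℂ) * I)))
          * ((starRingEnd ℂ) (a n) * ((ρ:ℂ)^n * Complex.exp ((n:ℂ) * -((θ:ℂ) * I))))
          = (a m * (starRingEnd ℂ) (a n) * ((ρ:ℂ)^m * (ρ:ℂ)^n))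
            * (Complex.exp ((m:ℂ) * ((θ:ℂ) * I)) * Complex.exp ((n:ℂ) * -((θ:ℂ) * I))) := by
            ring
        _ = (a m * (starRingEnd ℂ) (a n) * (ρ:ℂ) ^ (m + n))
            * Complex.exp ((((m:ℤ) - n : ℤ):ℂ) * θ * I) := by
            rw [hexp, ← pow_add]
    simp only [gval]
    rw [← MeasureTheory.integral_Ioc_eq_integral_Ioo,
      ← intervalIntegral.integral_of_le (by linarith [Real.pi_pos] : -π ≤ π),
      intervalIntegral.integral_const_mul]
    by_cases hmn : m = n
    · subst hmn
      simp only [sub_self, Int.cast_zero, zero_mul]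
      simp only [Complex.exp_zero]
      rw [intervalIntegral.integral_const]
      rw [Complex.mul_conj]
      simp only [if_true, ite_true, eq_self_iff_true]
      rw [Complex.normSq_eq_norm_sq]
      push_cast
      rw [Complex.real_smul]
      push_cast
      ring
    · rw [if_neg hmn, integral_exp_int_mul _ (by omega), mul_zero]
  -- sum up the diagonal
  have hflip : ∀ m : ℕ, (fun n : ℕ => if m = n
        then ((2 * π : ℝ) : ℂ) * ((‖a n‖ ^ 2 : ℝ) : ℂ) * (ρ : ℂ) ^ (2 * n) else 0)
      = (fun n : ℕ => if n = m
        then ((2 * π : ℝ) : ℂ) * ((‖a m‖ ^ 2 : ℝ) : ℂ) * (ρ : ℂ) ^ (2 * m) else 0) := by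
    intro m
    funext n
    by_cases h : n = m
    · subst h; simp
    · rw [if_neg (fun hh => h hh.symm), if_neg h]
  have hsum : Summable (fun mn : ℕ × ℕ =>
      if mn.1 = mn.2 then ((2 * π : ℝ) : ℂ) * ((‖a mn.2‖ ^ 2 : ℝ) : ℂ) * (ρ : ℂ) ^ (2 * mn.2)
        else 0) := by
    refine Summable.of_norm_bounded
      (f := fun mn : ℕ × ℕ =>
        if mn.1 = mn.2 then ((2 * π : ℝ) : ℂ) * ((‖a mn.2‖ ^ 2 : ℝ) : ℂ) * (ρ : ℂ) ^ (2 * mn.2)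
          else 0)
      (g := fun mn => (2 * π) * (c mn.1 * c mn.2)) (hcc.mul_left _) ?_
    rintro ⟨m, n⟩
    dsimp only
    by_cases hmn : m = n
    · subst hmn
      simp only [if_true, ite_true, eq_self_iff_true]
      rw [norm_mul, norm_mul, norm_pow]
      simp only [Complex.norm_real, Real.norm_eq_abs]
      rw [abs_of_pos Real.two_pi_pos,
        _root_.abs_of_nonneg (by positivity : (0:ℝ) ≤ ‖a m‖ ^ 2), _root_.abs_of_pos hρ0]
      rw [hcdef]
      simp only
      rw [two_mul m, pow_add]
      exact le_of_eq (by ring)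
    · rw [if_neg hmn]
      simp only [norm_zero]
      positivity
  have hfib : ∀ m : ℕ, Summable (fun n : ℕ => if m = n
      then ((2 * π : ℝ) : ℂ) * ((‖a n‖ ^ 2 : ℝ) : ℂ) * (ρ : ℂ) ^ (2 * n) else 0) := by
    intro m
    rw [hflip m]
    exact (hasSum_ite_eq m _).summable
  have B4 : (∑' mn : ℕ × ℕ,
      if mn.1 = mn.2 then ((2 * π : ℝ) : ℂ) * ((‖a mn.2‖ ^ 2 : ℝ) : ℂ) * (ρ : ℂ) ^ (2 * mn.2)
        else 0)
      = (((2 * π) * ∑' n : ℕ, ‖a n‖ ^ 2 * ρ ^ (2 * n) : ℝ) : ℂ) := by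
    rw [Summable.tsum_prod' hsum hfib]
    have : ∀ m : ℕ, (∑' n : ℕ, if m = n
        then ((2 * π : ℝ) : ℂ) * ((‖a n‖ ^ 2 : ℝ) : ℂ) * (ρ : ℂ) ^ (2 * n) else 0)
        = (((2 * π) * (‖a m‖ ^ 2 * ρ ^ (2 * m)) : ℝ) : ℂ) := by
      intro m
      rw [hflip m, tsum_ite_eq]
      push_cast
      ring
    rw [tsum_congr this, ← Complex.ofReal_tsum, tsum_mul_left]
  -- conclude
  have hcF : Continuous (fun θ => f (z θ) * (starRingEnd ℂ) (f (z θ))) :=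
    hcfz.mul (Complex.continuous_conj.comp hcfz)
  have hint : IntegrableOn (fun θ => f (z θ) * (starRingEnd ℂ) (f (z θ))) (Ioo (-π) π) :=
    (hcF.continuousOn.integrableOn_compact isCompact_Icc).mono_set Ioo_subset_Icc_self
  have hpt : ∀ θ : ℝ, ‖f (z θ)‖ ^ 2 = (f (z θ) * (starRingEnd ℂ) (f (z θ))).re := by
    intro θ
    rw [Complex.mul_conj]
    simp [Complex.normSq_eq_norm_sq, ← Complex.ofReal_pow]
  calc ∫ θ in Ioo (-π) π, ‖f (z θ)‖ ^ 2
      = ∫ θ in Ioo (-π) π, (f (z θ) * (starRingEnd ℂ) (f (z θ))).re := by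
        simp_rw [hpt]
    _ = (∫ θ in Ioo (-π) π, f (z θ) * (starRingEnd ℂ) (f (z θ))).re := by
        simp only [← RCLike.re_to_complex]
        exact integral_re hint
    _ = ((((2 * π) * ∑' n : ℕ, ‖a n‖ ^ 2 * ρ ^ (2 * n) : ℝ) : ℂ)).re := by
        rw [B2, tsum_congr B3, B4]
    _ = (2 * π) * ∑' n : ℕ, ‖a n‖ ^ 2 * ρ ^ (2 * n) := Complex.ofReal_re _

lemma hsymm_exp (p : ℝ × ℝ) :
    Complex.polarCoord.symm p = (p.1 : ℂ) * Complex.exp ((p.2 : ℂ) * I) := by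
  rw [Complex.polarCoord_symm_apply, Complex.exp_mul_I, Complex.ofReal_cos, Complex.ofReal_sin]

lemma hsymm_cont : Continuous (⇑Complex.polarCoord.symm : ℝ × ℝ → ℂ) := by
  have : (⇑Complex.polarCoord.symm : ℝ × ℝ → ℂ)
      = fun p => (p.1 : ℂ) * Complex.exp ((p.2 : ℂ) * I) := funext hsymm_exp
  rw [this]
  continuity

lemma summable_sq {a : ℕ → ℂ} {f : ℂ → ℂ}
    (hf : ∀ z ∈ ball (0 : ℂ) 1, HasSum (fun n : ℕ => a n * z ^ n) (f z))
    {r : ℝ} (hr0 : 0 ≤ r) (hr1 : r < 1) :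
    Summable (fun n => ‖a n‖ ^ 2 * r ^ (2 * n)) := by
  have hc : Summable (fun n => ‖a n‖ * r ^ n) := summable_norm_coeff hf hr0 hr1
  have hnn : ∀ n, 0 ≤ ‖a n‖ * r ^ n := fun n => by positivity
  obtain ⟨C, hC⟩ := (by simpa using hc.tendsto_atTop_zero :
    Filter.Tendsto (fun n => ‖a n‖ * r ^ n) Filter.atTop (nhds 0)).bddAbove_range
  have key : ∀ n, ‖a n‖ ^ 2 * r ^ (2 * n) = (‖a n‖ * r ^ n) ^ 2 := by
    intro n; rw [mul_pow, pow_mul]; ring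
  refine Summable.of_nonneg_of_le (fun n => by positivity) (fun n => ?_) (hc.mul_left C)
  rw [key, sq]
  exact mul_le_mul_of_nonneg_right (hC ⟨n, rfl⟩) (hnn n)

/-- Plancherel-type identity on the disc: if `f(z) = ∑ aₙ zⁿ` on `𝔻`, then
`∫_𝔻 |f|² dA = π ∑ |aₙ|²/(n+1)`, with both sides possibly infinite. -/
theorem bergman_norm_of_power_series (f : ℂ → ℂ) (a : ℕ → ℂ)
    (hf : ∀ z ∈ ball (0 : ℂ) 1, HasSum (fun n : ℕ => a n * z ^ n) (f z)) :
    ∫⁻ z in ball (0 : ℂ) 1, ENNReal.ofReal (‖f z‖ ^ 2) =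
      ENNReal.ofReal Real.pi * ∑' n : ℕ, ENNReal.ofReal (‖a n‖ ^ 2 / (n + 1)) := by
  have hcont : ContinuousOn f (ball (0 : ℂ) 1) := continuousOn_f hf
  have hparseval : ∀ {ρ : ℝ}, 0 < ρ → ρ < 1 →
    ∫ θ in Ioo (-π) π, ‖f ((ρ : ℂ) * Complex.exp ((θ:ℂ) * I))‖ ^ 2
      = (2 * π) * ∑' n : ℕ, ‖a n‖ ^ 2 * ρ ^ (2 * n) :=
    fun h1 h2 => circle_parseval hf h1 h2
  have hpolar : ∫⁻ z in ball (0 : ℂ) 1, ENNReal.ofReal (‖f z‖ ^ 2) =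
      ∫⁻ p in Ioo (0:ℝ) 1 ×ˢ Ioo (-π) π,
        ENNReal.ofReal p.1 * ENNReal.ofReal (‖f (Complex.polarCoord.symm p)‖ ^ 2) :=
    lintegral_ball_polar (fun z => ENNReal.ofReal (‖f z‖ ^ 2))
  rw [hpolar]
  set S : Set (ℝ × ℝ) := Ioo (0:ℝ) 1 ×ˢ Ioo (-π) π with hS
  have hSm : MeasurableSet S := measurableSet_Ioo.prod measurableSet_Ioo
  -- a.e.-measurability of the integrand on S
  have hmaps : ∀ p ∈ S, Complex.polarCoord.symm p ∈ ball (0:ℂ) 1 := by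
    rintro ⟨ρ, θ⟩ hp
    rw [mem_ball_zero_iff,
      Complex.norm_polarCoord_symm, abs_of_pos hp.1.1]
    exact hp.1.2
  have hfm : AEMeasurable (fun p => ENNReal.ofReal p.1
      * ENNReal.ofReal (‖f (Complex.polarCoord.symm p)‖ ^ 2)) (volume.restrict S) := by
    have h1 : ContinuousOn (fun p => f (Complex.polarCoord.symm p)) S :=
      hcont.comp hsymm_cont.continuousOn hmaps
    have h2 : AEMeasurable (fun p => f (Complex.polarCoord.symm p)) (volume.restrict S) :=
      h1.aemeasurable hSm
    exact (measurable_fst.ennreal_ofReal.aemeasurable).mul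
      ((h2.norm.pow_const 2).ennreal_ofReal)
  -- switch to product measure and apply Tonelli
  rw [Measure.volume_eq_prod, ← Measure.prod_restrict, lintegral_prod _ (by
    rwa [Measure.prod_restrict, ← Measure.volume_eq_prod])]
  have inner_eq : ∀ ρ ∈ Ioo (0:ℝ) 1,
      (∫⁻ θ in Ioo (-π) π, ENNReal.ofReal ρ
          * ENNReal.ofReal (‖f (Complex.polarCoord.symm (ρ, θ))‖ ^ 2))
        = ∑' n : ℕ, ENNReal.ofReal (2 * π * ‖a n‖ ^ 2 * ρ ^ (2 * n + 1)) := by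
    intro ρ hρ
    obtain ⟨hρ0, hρ1⟩ := hρ
    have hzcont : Continuous (fun θ : ℝ => f ((ρ:ℂ) * Complex.exp ((θ:ℂ) * I))) := by
      refine hcont.comp_continuous (by continuity) (fun θ => ?_)
      rw [mem_ball_zero_iff]
      simp only [norm_mul, Complex.norm_exp_ofReal_mul_I, mul_one, Complex.norm_real,
        Real.norm_eq_abs]
      rwa [abs_of_pos hρ0]
    have hsymmθ : ∀ θ : ℝ, Complex.polarCoord.symm (ρ, θ) = (ρ:ℂ) * Complex.exp ((θ:ℂ) * I) :=
      fun θ => hsymm_exp (ρ, θ)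
    simp only [hsymmθ]
    rw [lintegral_const_mul' _ _ ENNReal.ofReal_ne_top]
    have hInt : IntegrableOn (fun θ : ℝ => ‖f ((ρ:ℂ) * Complex.exp ((θ:ℂ) * I))‖ ^ 2)
        (Ioo (-π) π) :=
      (((hzcont.norm.pow 2).continuousOn).integrableOn_compact
        isCompact_Icc).mono_set Ioo_subset_Icc_self
    rw [← ofReal_integral_eq_lintegral_ofReal hInt (ae_of_all _ fun θ => by positivity)]
    rw [hparseval hρ0 hρ1, ← ENNReal.ofReal_mul hρ0.le]
    have hre : ρ * (2 * π * ∑' n : ℕ, ‖a n‖ ^ 2 * ρ ^ (2 * n))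
        = ∑' n : ℕ, 2 * π * ‖a n‖ ^ 2 * ρ ^ (2 * n + 1) := by
      rw [← tsum_mul_left, ← tsum_mul_left]
      exact tsum_congr fun n => by ring
    rw [hre, ENNReal.ofReal_tsum_of_nonneg (fun n => by positivity)
      (((summable_sq hf hρ0.le hρ1).mul_left (2 * π * ρ)).congr (fun n => by ring))]
  rw [setLIntegral_congr_fun measurableSet_Ioo inner_eq]
  rw [lintegral_tsum (f := fun n ρ => ENNReal.ofReal (2 * π * ‖a n‖ ^ 2 * ρ ^ (2 * n + 1))) (fun n =>
    (((continuous_const.mul (continuous_pow (2 * n + 1))).measurable).ennreal_ofReal).aemeasurable)]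
  have term_eq : ∀ n : ℕ,
      ∫⁻ ρ in Ioo (0:ℝ) 1, ENNReal.ofReal (2 * π * ‖a n‖ ^ 2 * ρ ^ (2 * n + 1))
        = ENNReal.ofReal π * ENNReal.ofReal (‖a n‖ ^ 2 / (n + 1)) := by
    intro n
    have hInt : IntegrableOn (fun ρ : ℝ => 2 * π * ‖a n‖ ^ 2 * ρ ^ (2 * n + 1)) (Ioo 0 1) :=
      (((continuous_const.mul (continuous_pow (2 * n + 1))).continuousOn).integrableOn_compact
        isCompact_Icc).mono_set Ioo_subset_Icc_self
    rw [← ofReal_integral_eq_lintegral_ofReal hInt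
      ((ae_restrict_iff' measurableSet_Ioo).2 (ae_of_all _ fun ρ hρ => by have := hρ.1.le; positivity))]
    rw [← MeasureTheory.integral_Ioc_eq_integral_Ioo,
      ← intervalIntegral.integral_of_le (by norm_num : (0:ℝ) ≤ 1)]
    rw [intervalIntegral.integral_const_mul, integral_pow, ← ENNReal.ofReal_mul Real.pi_pos.le]
    congr 1
    have hne : ((2 * n + 1 : ℕ) : ℝ) + 1 ≠ 0 := by positivity
    have hn1 : (n : ℝ) + 1 ≠ 0 := by positivity
    push_cast
    rw [one_pow, zero_pow (by omega : 2 * n + 1 + 1 ≠ 0)]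
    field_simp
    ring
  rw [tsum_congr term_eq, ENNReal.tsum_mul_left]
end

section
/- Reproducing property of the Bergman kernel of the disc: for every holomorphic $f \in L^2(\mathbb{D})$ and every $z \in \mathbb{D}$, $f(z) = \int_{\mathbb{D}} \frac{f(w)}{\pi (1 - z\overline{w})^2}\, dA(w)$. -/
open MeasureTheory Metric Complex Set Filter Topology

lemma cauchy_deriv_pt {g : ℂ → ℂ} {R : ℝ} (hR : 1 < R)
    (hg : DifferentiableOn ℂ g (ball (0:ℂ) R)) {a : ℂ} (ha : a ∈ ball (0:ℂ) 1) :
    (∮ ζ in C(0, 1), ((ζ - a)^2)⁻¹ • g ζ) = (2 * Real.pi * I : ℂ) • deriv g a := by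
  have hball : ball (0:ℂ) 1 ⊆ ball (0:ℂ) R := ball_subset_ball hR.le
  have hsub : closedBall (0:ℂ) 1 ⊆ ball (0:ℂ) R := closedBall_subset_ball hR
  have hmem : ball (0:ℂ) R ∈ 𝓝 a := isOpen_ball.mem_nhds (hball ha)
  have hds : DifferentiableOn ℂ (dslope g a) (ball (0:ℂ) R) :=
    (differentiableOn_dslope hmem).2 hg
  have hdc : DiffContOnCl ℂ (dslope g a) (ball (0:ℂ) 1) :=
    DifferentiableOn.diffContOnCl <| (hds.mono (by
      simpa [closure_ball (0:ℂ) one_ne_zero] using hsub))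
  have key := hdc.circleIntegral_sub_inv_smul ha
  rw [dslope_same] at key
  have hane : ∀ ζ ∈ sphere (0:ℂ) 1, ζ ≠ a := by
    intro ζ hζ
    intro h; subst h
    have hx1 : ‖ζ‖ = 1 := by simpa using hζ
    have hx2 : ‖ζ‖ < 1 := by simpa using ha
    linarith
  -- rewrite integrand on sphere
  have h1 : ∀ ζ ∈ sphere (0:ℂ) 1,
      (ζ - a)⁻¹ • dslope g a ζ = ((ζ - a)^2)⁻¹ • g ζ - (g a) • ((ζ - a)^2)⁻¹ := by
    intro ζ hζ
    have hne : ζ ≠ a := hane ζ hζ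
    rw [dslope_of_ne _ hne, slope_def_field]
    have h2 : ζ - a ≠ 0 := sub_ne_zero.2 hne
    simp only [smul_eq_mul]
    rw [div_eq_mul_inv, sq, mul_inv]
    ring
  have hcont_ds : ContinuousOn (fun ζ => (ζ - a)⁻¹ • dslope g a ζ) (sphere (0:ℂ) 1) := by
    apply ContinuousOn.fun_smul
    · exact ((continuousOn_id.sub continuousOn_const).inv₀
        (fun ζ hζ => sub_ne_zero.2 (hane ζ hζ)))
    · exact (hds.continuousOn).mono (fun ζ hζ => hsub (sphere_subset_closedBall hζ))
  have hcont_k : ContinuousOn (fun ζ : ℂ => ((ζ - a)^2)⁻¹) (sphere (0:ℂ) 1) := by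
    apply ContinuousOn.inv₀
    · exact ((continuousOn_id.sub continuousOn_const).pow 2)
    · exact fun ζ hζ => pow_ne_zero 2 (sub_ne_zero.2 (hane ζ hζ))
  have hci1 : CircleIntegrable (fun ζ => (ζ - a)⁻¹ • dslope g a ζ) 0 1 :=
    hcont_ds.circleIntegrable zero_le_one
  have hci2 : CircleIntegrable (fun ζ : ℂ => g a • ((ζ - a)^2)⁻¹) 0 1 :=
    (continuousOn_const.fun_smul hcont_k).circleIntegrable zero_le_one
  have hciA : CircleIntegrable (fun ζ : ℂ => ((ζ - a)^2)⁻¹ • g ζ) 0 1 := by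
    refine (hcont_k.smul ?_).circleIntegrable zero_le_one
    exact (hg.continuousOn).mono (fun ζ hζ => hsub (sphere_subset_closedBall hζ))
  have hzero : (∮ ζ in C(0, 1), ((ζ - a)^2)⁻¹) = 0 := by
    have h0 := circleIntegral.integral_sub_zpow_of_ne (by decide : (-2 : ℤ) ≠ -1) (0:ℂ) a 1
    have h1' : (∮ ζ in C((0:ℂ), 1), ((ζ - a)^2)⁻¹) = ∮ z in C((0:ℂ), 1), (z - a) ^ (-2 : ℤ) := by
      apply circleIntegral.integral_congr zero_le_one
      intro ζ hζ
      simp only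
      rw [zpow_neg]; norm_num [zpow_ofNat]
    rw [h1', h0]
  have step1 : (∮ z in C(0, 1), (z - a)⁻¹ • dslope g a z)
      = (∮ ζ in C(0, 1), ((ζ - a)^2)⁻¹ • g ζ) - ∮ ζ in C(0, 1), g a • ((ζ - a)^2)⁻¹ := by
    rw [← circleIntegral.integral_sub hciA hci2]
    exact circleIntegral.integral_congr zero_le_one (fun ζ hζ => h1 ζ hζ)
  rw [step1, circleIntegral.integral_smul (g a) (fun ζ : ℂ => ((ζ - a)^2)⁻¹) 0 1, hzero, smul_zero, sub_zero] at key
  exact key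

lemma inner_int (f : ℂ → ℂ) (hf : DifferentiableOn ℂ f (ball (0:ℂ) 1))
    {z : ℂ} (hz : z ∈ ball (0:ℂ) 1) {r : ℝ} (hr0 : 0 < r) (hr1 : r < 1) :
    (∫ θ in Ioo (-Real.pi) Real.pi,
        f (↑r * exp (↑θ * I)) / ((Real.pi:ℂ) * (1 - z * (starRingEnd ℂ) (↑r * exp (↑θ * I)))^2))
      = 2 * (f ((r:ℂ)^2 * z) + (r:ℂ)^2 * z * deriv f ((r:ℂ)^2 * z)) := by
  have hz1 : ‖z‖ < 1 := by simpa using hz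
  set a : ℂ := z * r with ha_def
  have ha : a ∈ ball (0:ℂ) 1 := by
    simp only [mem_ball, dist_zero_right, ha_def]
    calc ‖z * (r:ℂ)‖ = ‖z‖ * r := by
          simp [norm_mul, Complex.norm_real, Real.norm_eq_abs, abs_of_pos hr0]
      _ < 1 := by nlinarith [norm_nonneg z]
  set Φ : ℂ → ℂ := fun ζ => f (r * ζ) * ζ with hΦ_def
  have hRr : 1 < 1/r := by rw [lt_div_iff₀ hr0]; linarith
  have hΦ : DifferentiableOn ℂ Φ (ball (0:ℂ) (1/r)) := by
    apply DifferentiableOn.mul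
    · apply DifferentiableOn.comp hf
      · exact (differentiable_const _).mul differentiable_id |>.differentiableOn
      · intro ζ hζ
        simp only [mem_ball, dist_zero_right] at hζ ⊢
        calc ‖(r:ℂ) * ζ‖ = r * ‖ζ‖ := by
              simp [norm_mul, Complex.norm_real, Real.norm_eq_abs, abs_of_pos hr0]
          _ < r * (1/r) := by exact mul_lt_mul_of_pos_left hζ hr0
          _ = 1 := by field_simp
    · exact differentiable_id.differentiableOn
  -- derivative of Φ at a
  have hfa : DifferentiableAt ℂ f ((r:ℂ) * a) := by
    apply hf.differentiableAt
    apply isOpen_ball.mem_nhds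
    simp only [mem_ball, dist_zero_right]
    calc ‖(r:ℂ) * a‖ = r * ‖a‖ := by
          simp [norm_mul, Complex.norm_real, Real.norm_eq_abs, abs_of_pos hr0]
      _ < 1 * 1 := by
          apply mul_lt_mul' hr1.le _ (norm_nonneg _) one_pos
          simpa using ha
      _ = 1 := one_mul 1
  have hΦderiv : HasDerivAt Φ (deriv f ((r:ℂ) * a) * r * a + f ((r:ℂ) * a)) a := by
    have h1 : HasDerivAt (fun ζ : ℂ => f ((r:ℂ) * ζ)) (deriv f ((r:ℂ) * a) * r) a := by
      have h0 : HasDerivAt (fun ζ : ℂ => (r:ℂ) * ζ) (r:ℂ) a := by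
        simpa using (hasDerivAt_id a).const_mul (r:ℂ)
      exact (hfa.hasDerivAt).comp a h0
    have := h1.fun_mul (hasDerivAt_id' a)
    simpa [hΦ_def, mul_one] using this
  have hkey := cauchy_deriv_pt hRr hΦ ha
  rw [hΦderiv.deriv] at hkey
  set F : ℝ → ℂ := fun θ =>
    f (↑r * exp (↑θ * I)) / ((Real.pi:ℂ) * (1 - z * (starRingEnd ℂ) (↑r * exp (↑θ * I)))^2)
    with hF_def
  have hper : Function.Periodic F (2 * Real.pi) := by
    intro θ
    have : ((↑(θ + 2 * Real.pi) : ℂ) * I) = ↑θ * I + 2 * ↑Real.pi * I := by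
      push_cast; ring
    simp only [hF_def, this, exp_add, exp_two_pi_mul_I, mul_one]
  have hle : -Real.pi ≤ Real.pi := by linarith [Real.pi_pos]
  have e1 : (∫ θ in Ioo (-Real.pi) Real.pi, F θ) = ∫ θ in (-Real.pi)..Real.pi, F θ := by
    rw [intervalIntegral.integral_of_le hle, MeasureTheory.integral_Ioc_eq_integral_Ioo]
  have e2 : (∫ θ in (-Real.pi)..Real.pi, F θ) = ∫ θ in (0:ℝ)..(2*Real.pi), F θ := by
    have h := hper.intervalIntegral_add_eq (-Real.pi) 0
    rw [show -Real.pi + 2*Real.pi = Real.pi by ring, zero_add] at h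
    exact h
  have hptwise : ∀ θ : ℝ, F θ = ((Real.pi : ℂ) * I)⁻¹ •
      (deriv (circleMap 0 1) θ • ((circleMap 0 1 θ - a)^2)⁻¹ • Φ (circleMap 0 1 θ)) := by
    intro θ
    have hζ0 : exp (↑θ * I) ≠ 0 := exp_ne_zero _
    have hζa : exp (↑θ * I) - a ≠ 0 := by
      intro h
      have h1 : ‖exp (↑θ * I)‖ = 1 := Complex.norm_exp_ofReal_mul_I θ
      have h2 : ‖a‖ < 1 := by simpa using ha
      rw [sub_eq_zero] at h
      rw [h] at h1
      linarith
    have hconj : (starRingEnd ℂ) (↑r * exp (↑θ * I)) = ↑r * (exp (↑θ * I))⁻¹ := by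
      rw [map_mul, conj_ofReal, ← exp_conj]
      congr 1
      rw [← exp_neg]
      congr 1
      simp [map_mul, conj_ofReal]
    rw [hF_def]
    simp only [deriv_circleMap, circleMap_zero, one_mul, ofReal_one]
    rw [hconj]
    simp only [hΦ_def, smul_eq_mul]
    have hπ : (Real.pi : ℂ) ≠ 0 := by
      simpa using Real.pi_ne_zero
    field_simp [ha_def]
    have hX0 : (-((r:ℂ) * exp (↑θ * I) * z * 2) + (r:ℂ) ^ 2 * z ^ 2 + exp (↑θ * I) ^ 2) ≠ 0 := by
      rw [ha_def] at hζa
      have : (-((r:ℂ) * exp (↑θ * I) * z * 2) + (r:ℂ) ^ 2 * z ^ 2 + exp (↑θ * I) ^ 2) = (exp (↑θ * I) - z * r)^2 := by ring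
      rw [this]; exact pow_ne_zero 2 hζa
    rw [ha_def]
    linear_combination (f (↑r * exp (↑θ * I))) * mul_inv_cancel₀ hX0
  have e3 : (∫ θ in (0:ℝ)..(2*Real.pi), F θ)
      = ((Real.pi : ℂ) * I)⁻¹ • ∮ ζ in C(0, 1), ((ζ - a)^2)⁻¹ • Φ ζ := by
    rw [circleIntegral, ← intervalIntegral.integral_smul]
    exact intervalIntegral.integral_congr (fun θ _ => hptwise θ)
  rw [e1, e2, e3, hkey]
  have hra : (r:ℂ) * a = (r:ℂ)^2 * z := by rw [ha_def]; ring
  rw [hra]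
  simp only [smul_eq_mul]
  have hπ : (Real.pi : ℂ) ≠ 0 := by simpa using Real.pi_ne_zero
  field_simp
  ring

lemma kernel_cont {z : ℂ} (hz : z ∈ ball (0:ℂ) 1) (f : ℂ → ℂ)
    (hf : DifferentiableOn ℂ f (ball (0:ℂ) 1)) :
    ContinuousOn (fun w => f w / ((Real.pi:ℂ) * (1 - z * (starRingEnd ℂ) w)^2)) (ball (0:ℂ) 1) := by
  have hz1 : ‖z‖ < 1 := by simpa using hz
  apply ContinuousOn.div hf.continuousOn
  · exact (continuousOn_const.mul
      ((continuousOn_const.sub (continuousOn_const.mul (Complex.continuous_conj.continuousOn))).pow 2))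
  · intro w hw
    have hw1 : ‖w‖ < 1 := by simpa using hw
    have hne : (1 : ℂ) - z * (starRingEnd ℂ) w ≠ 0 := by
      intro h
      have : ‖z * (starRingEnd ℂ) w‖ = 1 := by
        have := sub_eq_zero.1 h
        rw [← this]; simp
      rw [norm_mul, Complex.norm_conj] at this
      nlinarith [norm_nonneg z, norm_nonneg w]
    have hπ : (Real.pi : ℂ) ≠ 0 := by simpa using Real.pi_ne_zero
    exact mul_ne_zero hπ (pow_ne_zero 2 hne)

lemma subdisc (f : ℂ → ℂ) (hf : DifferentiableOn ℂ f (ball (0:ℂ) 1))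
    {z : ℂ} (hz : z ∈ ball (0:ℂ) 1) {ρ : ℝ} (hρ0 : 0 < ρ) (hρ1 : ρ < 1) :
    (∫ w in ball (0:ℂ) ρ, f w / ((Real.pi:ℂ) * (1 - z * (starRingEnd ℂ) w)^2))
      = (ρ:ℂ)^2 * f ((ρ:ℂ)^2 * z) := by
  have hz1 : ‖z‖ < 1 := by simpa using hz
  set G : ℂ → ℂ := fun w => f w / ((Real.pi:ℂ) * (1 - z * (starRingEnd ℂ) w)^2) with hG_def
  have hGcont : ContinuousOn G (ball (0:ℂ) 1) := kernel_cont hz f hf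
  set S : Set (ℝ × ℝ) := Ioo (0:ℝ) ρ ×ˢ Ioo (-Real.pi) Real.pi with hS_def
  -- polar coordinates
  have hSmeas : MeasurableSet S := by rw [hS_def]; measurability
  have hsub : S ⊆ polarCoord.target := by
    rw [hS_def, polarCoord_target]
    intro p hp
    exact ⟨Ioo_subset_Ioi_self hp.1, hp.2⟩
  have step1 : (∫ w in ball (0:ℂ) ρ, G w)
      = ∫ p in polarCoord.target, p.1 • (ball (0:ℂ) ρ).indicator G (Complex.polarCoord.symm p) := by
    rw [← integral_indicator measurableSet_ball,
      ← Complex.integral_comp_polarCoord_symm ((ball (0:ℂ) ρ).indicator G)]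
  have step2 : (∫ p in polarCoord.target,
        p.1 • (ball (0:ℂ) ρ).indicator G (Complex.polarCoord.symm p))
      = ∫ p in S, p.1 • G (Complex.polarCoord.symm p) := by
    rw [← inter_eq_self_of_subset_right hsub, ← setIntegral_indicator hSmeas]
    apply setIntegral_congr_fun
    · rw [polarCoord_target]
      measurability
    · intro p hp
      rw [polarCoord_target] at hp
      obtain ⟨hp1, hp2⟩ := hp
      simp only [mem_Ioi] at hp1
      have habs : ‖Complex.polarCoord.symm p‖ = p.1 := by
        rw [Complex.norm_polarCoord_symm, abs_of_pos hp1]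
      simp only
      by_cases hmem : p.1 < ρ
      · rw [indicator_of_mem, indicator_of_mem]
        · rw [hS_def]; exact ⟨⟨hp1, hmem⟩, hp2⟩
        · simp only [mem_ball, dist_zero_right, habs]; exact hmem
      · rw [indicator_of_notMem, indicator_of_notMem, smul_zero]
        · rw [hS_def]; intro h; exact hmem h.1.2
        · simp only [mem_ball, dist_zero_right, habs]; exact hmem
  -- continuity / integrability on the product set
  have hρball : closedBall (0:ℂ) ρ ⊆ ball (0:ℂ) 1 := closedBall_subset_ball hρ1
  have hcs : Continuous (fun p : ℝ × ℝ => Complex.polarCoord.symm p) := by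
    simp only [Complex.polarCoord_symm_apply]
    fun_prop
  set K : Set (ℝ × ℝ) := Icc (0:ℝ) ρ ×ˢ Icc (-Real.pi) Real.pi with hK_def
  have hmapsK : MapsTo (fun p : ℝ × ℝ => Complex.polarCoord.symm p) K (closedBall (0:ℂ) ρ) := by
    intro p hp
    simp only [mem_closedBall, dist_zero_right, Complex.norm_polarCoord_symm]
    rw [_root_.abs_of_nonneg hp.1.1]
    exact hp.1.2
  have hcontK : ContinuousOn (fun p : ℝ × ℝ => p.1 • G (Complex.polarCoord.symm p)) K :=
    (continuous_fst.continuousOn).smul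
      (((hGcont.mono hρball).comp hcs.continuousOn) hmapsK)
  have hintS : IntegrableOn (fun p : ℝ × ℝ => p.1 • G (Complex.polarCoord.symm p)) S := by
    apply IntegrableOn.mono_set (t := K)
    · exact hcontK.integrableOn_compact (isCompact_Icc.prod isCompact_Icc)
    · rw [hS_def, hK_def]
      exact Set.prod_mono Ioo_subset_Icc_self Ioo_subset_Icc_self
  have step3 : (∫ p in S, p.1 • G (Complex.polarCoord.symm p))
      = ∫ r in Ioo (0:ℝ) ρ, ∫ θ in Ioo (-Real.pi) Real.pi,
          r • G (Complex.polarCoord.symm (r, θ)) := by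
    rw [hS_def, Measure.volume_eq_prod] at hintS ⊢
    exact setIntegral_prod _ hintS
  have hsymm : ∀ (r θ : ℝ), Complex.polarCoord.symm (r, θ) = ↑r * exp (↑θ * I) := by
    intro r θ
    rw [Complex.polarCoord_symm_apply, Complex.exp_mul_I]
    norm_num [Complex.ofReal_cos, Complex.ofReal_sin]
  have step4 : (∫ r in Ioo (0:ℝ) ρ, ∫ θ in Ioo (-Real.pi) Real.pi,
          r • G (Complex.polarCoord.symm (r, θ)))
      = ∫ r in Ioo (0:ℝ) ρ,
          r • (2 * (f ((r:ℂ)^2 * z) + (r:ℂ)^2 * z * deriv f ((r:ℂ)^2 * z))) := by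
    apply setIntegral_congr_fun measurableSet_Ioo
    intro r hr
    simp only
    have heq : (∫ θ in Ioo (-Real.pi) Real.pi, r • G (Complex.polarCoord.symm (r, θ)))
        = ∫ θ in Ioo (-Real.pi) Real.pi, r •
            (f (↑r * exp (↑θ * I)) / ((Real.pi:ℂ) * (1 - z * (starRingEnd ℂ) (↑r * exp (↑θ * I)))^2)) := by
      apply setIntegral_congr_fun measurableSet_Ioo
      intro θ _
      simp only [hsymm r θ, hG_def]
    rw [heq, integral_smul, inner_int f hf hz hr.1 (lt_trans hr.2 hρ1)]
  -- radial integral via FTC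
  have hmaps : ∀ x : ℝ, x ∈ uIcc (0:ℝ) ρ → ((x:ℂ)^2 * z) ∈ ball (0:ℂ) 1 := by
    intro x hx
    rw [uIcc_of_le hρ0.le] at hx
    simp only [mem_ball, dist_zero_right]
    rw [norm_mul, norm_pow, Complex.norm_real, Real.norm_eq_abs, _root_.abs_of_nonneg hx.1]
    nlinarith [norm_nonneg z, hx.2, hx.1]
  have hders : ∀ x : ℝ, x ∈ uIcc (0:ℝ) ρ →
      HasDerivAt (fun t : ℝ => ((t:ℂ))^2 * f (((t:ℂ))^2 * z))
        ((x:ℝ) • (2 * (f ((x:ℂ)^2 * z) + (x:ℂ)^2 * z * deriv f ((x:ℂ)^2 * z)))) x := by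
    intro x hx
    have hfd : DifferentiableAt ℂ f ((x:ℂ)^2 * z) :=
      hf.differentiableAt (isOpen_ball.mem_nhds (hmaps x hx))
    have h1 : HasDerivAt (fun ζ : ℂ => ζ^2 * f (ζ^2 * z))
        (2 * (x:ℂ) * f ((x:ℂ)^2 * z) + (x:ℂ)^2 * (deriv f ((x:ℂ)^2 * z) * (2 * (x:ℂ) * z))) (x:ℂ) := by
      have hp : HasDerivAt (fun ζ : ℂ => ζ^2) (2 * (x:ℂ)) (x:ℂ) := by
        simpa using hasDerivAt_pow 2 (x:ℂ)
      have hin : HasDerivAt (fun ζ : ℂ => ζ^2 * z) (2 * (x:ℂ) * z) (x:ℂ) := hp.mul_const z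
      have hcomp : HasDerivAt (fun ζ : ℂ => f (ζ^2 * z))
          (deriv f ((x:ℂ)^2 * z) * (2 * (x:ℂ) * z)) (x:ℂ) := by
        exact (hfd.hasDerivAt).comp (x:ℂ) hin
      simpa using hp.fun_mul hcomp
    have := h1.comp_ofReal
    convert this using 1
    rw [Complex.real_smul]
    ring
  have hcont_d : ContinuousOn
      (fun x : ℝ => (x:ℝ) • (2 * (f ((x:ℂ)^2 * z) + (x:ℂ)^2 * z * deriv f ((x:ℂ)^2 * z))))
      (uIcc (0:ℝ) ρ) := by
    have hmap' : MapsTo (fun x : ℝ => ((x:ℂ))^2 * z) (uIcc (0:ℝ) ρ) (ball (0:ℂ) 1) :=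
      fun x hx => hmaps x hx
    have hcm : ContinuousOn (fun x : ℝ => ((x:ℂ))^2 * z) (uIcc (0:ℝ) ρ) := by fun_prop
    have hdf : ContinuousOn (deriv f) (ball (0:ℂ) 1) :=
      ((hf.analyticOnNhd isOpen_ball).deriv).continuousOn
    exact (continuousOn_id).smul (continuousOn_const.mul
      (((hf.continuousOn.comp hcm hmap')).add
        (hcm.mul ((hdf.comp hcm hmap')))))
  have step5 : (∫ r in Ioo (0:ℝ) ρ,
        r • (2 * (f ((r:ℂ)^2 * z) + (r:ℂ)^2 * z * deriv f ((r:ℂ)^2 * z))))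
      = (ρ:ℂ)^2 * f ((ρ:ℂ)^2 * z) := by
    rw [← integral_Ioc_eq_integral_Ioo, ← intervalIntegral.integral_of_le hρ0.le]
    rw [intervalIntegral.integral_eq_sub_of_hasDerivAt hders
      (hcont_d.intervalIntegrable)]
    norm_num
  rw [step1, step2, step3, step4, step5]

set_option maxHeartbeats 1000000 in
/-- Reproducing property of the Bergman kernel of the disc. -/
theorem bergman_reproducing_disc (f : ℂ → ℂ)
    (hf : DifferentiableOn ℂ f (ball (0 : ℂ) 1))
    (hf2 : MemLp f 2 (volume.restrict (ball (0 : ℂ) 1)))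
    (z : ℂ) (hz : z ∈ ball (0 : ℂ) 1) :
    f z = ∫ w in ball (0 : ℂ) 1,
        f w / ((Real.pi : ℂ) * (1 - z * (starRingEnd ℂ) w) ^ 2) := by
  have hz1 : ‖z‖ < 1 := by simpa using hz
  set G : ℂ → ℂ := fun w => f w / ((Real.pi:ℂ) * (1 - z * (starRingEnd ℂ) w)^2) with hG_def
  -- integrability
  haveI : Fact ((volume (ball (0:ℂ) 1)) < ⊤) := ⟨measure_ball_lt_top⟩
  have hf_int : Integrable f (volume.restrict (ball (0:ℂ) 1)) :=
    (memLp_one_iff_integrable.mp (hf2.mono_exponent one_le_two))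
  have hπ : (Real.pi : ℂ) ≠ 0 := by simpa using Real.pi_ne_zero
  have hden_ne : ∀ w : ℂ, w ∈ ball (0:ℂ) 1 → ((Real.pi:ℂ) * (1 - z * (starRingEnd ℂ) w)^2) ≠ 0 := by
    intro w hw
    have hw1 : ‖w‖ < 1 := by simpa using hw
    refine mul_ne_zero hπ (pow_ne_zero 2 ?_)
    intro h
    have : ‖z * (starRingEnd ℂ) w‖ = 1 := by
      have := sub_eq_zero.1 h; rw [← this]; simp
    rw [norm_mul, Complex.norm_conj] at this
    nlinarith [norm_nonneg z, norm_nonneg w]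
  have hbound : ∀ w : ℂ, w ∈ ball (0:ℂ) 1 →
      ‖(((Real.pi:ℂ) * (1 - z * (starRingEnd ℂ) w)^2))⁻¹‖ ≤ (Real.pi * (1 - ‖z‖)^2)⁻¹ := by
    intro w hw
    have hw1 : ‖w‖ < 1 := by simpa using hw
    rw [norm_inv, norm_mul, norm_pow]
    have h1 : 1 - ‖z‖ ≤ ‖1 - z * (starRingEnd ℂ) w‖ := by
      calc 1 - ‖z‖ ≤ 1 - ‖z * (starRingEnd ℂ) w‖ := by
            rw [norm_mul, Complex.norm_conj]
            nlinarith [norm_nonneg z, norm_nonneg w]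
        _ ≤ ‖1 - z * (starRingEnd ℂ) w‖ := by
            have := norm_sub_norm_le (1:ℂ) (z * (starRingEnd ℂ) w)
            simpa using this
    have h0 : (0:ℝ) < 1 - ‖z‖ := by linarith
    rw [Complex.norm_real, Real.norm_eq_abs, _root_.abs_of_pos Real.pi_pos]
    apply inv_anti₀
    · positivity
    · apply mul_le_mul_of_nonneg_left _ Real.pi_pos.le
      exact pow_le_pow_left₀ h0.le h1 2
  have hG_int : IntegrableOn G (ball (0:ℂ) 1) := by
    have hk_cont : ContinuousOn (fun w : ℂ => (((Real.pi:ℂ) * (1 - z * (starRingEnd ℂ) w)^2))⁻¹)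
        (ball (0:ℂ) 1) := by
      apply ContinuousOn.inv₀
      · exact continuousOn_const.mul
          ((continuousOn_const.sub (continuousOn_const.mul Complex.continuous_conj.continuousOn)).pow 2)
      · exact hden_ne
    have hk_meas : AEStronglyMeasurable (fun w : ℂ => (((Real.pi:ℂ) * (1 - z * (starRingEnd ℂ) w)^2))⁻¹)
        (volume.restrict (ball (0:ℂ) 1)) :=
      hk_cont.aestronglyMeasurable measurableSet_ball
    have hk_bdd : ∀ᵐ w ∂(volume.restrict (ball (0:ℂ) 1)),
        ‖(((Real.pi:ℂ) * (1 - z * (starRingEnd ℂ) w)^2))⁻¹‖ ≤ (Real.pi * (1 - ‖z‖)^2)⁻¹ :=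
      (ae_restrict_iff' measurableSet_ball).2 (Filter.Eventually.of_forall hbound)
    have := hf_int.bdd_mul hk_meas hk_bdd
    apply this.congr
    apply Filter.Eventually.of_forall
    intro w
    rw [hG_def]
    simp only [div_eq_mul_inv]
    ring
  -- sequence of radii
  set ρ : ℕ → ℝ := fun n => 1 - 1/(n+2) with hρ_def
  have hρ0 : ∀ n, 0 < ρ n := by
    intro n
    have h2 : (1:ℝ)/(n+2) ≤ 1/2 := by
      apply div_le_div_of_nonneg_left one_pos.le two_pos
      exact_mod_cast by linarith [Nat.cast_nonneg (α := ℝ) n]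
    simp only [hρ_def]; linarith
  have hρ1 : ∀ n, ρ n < 1 := by
    intro n
    have : (0:ℝ) < 1/(n+2) := by positivity
    simp only [hρ_def]; linarith
  have hρmono : Monotone ρ := by
    intro m n hmn
    simp only [hρ_def]
    have : (1:ℝ)/(n+2) ≤ 1/(m+2) := by
      apply div_le_div_of_nonneg_left one_pos.le (by positivity)
      exact_mod_cast by omega
    linarith
  have hρtend : Filter.Tendsto ρ Filter.atTop (𝓝 1) := by
    have h1 : Filter.Tendsto (fun n : ℕ => ((n:ℝ)+2)⁻¹) Filter.atTop (𝓝 0) :=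
      (Filter.tendsto_atTop_add_const_right Filter.atTop 2 tendsto_natCast_atTop_atTop).inv_tendsto_atTop
    have := (tendsto_const_nhds (x := (1:ℝ))).sub h1
    simpa [hρ_def, one_div] using this
  -- monotone family of balls
  have hU : (⋃ n, ball (0:ℂ) (ρ n)) = ball (0:ℂ) 1 := by
    apply subset_antisymm
    · exact iUnion_subset fun n => ball_subset_ball (hρ1 n).le
    · intro w hw
      have hw1 : ‖w‖ < 1 := by simpa [mem_ball, dist_zero_right] using hw
      have : ∀ᶠ n in Filter.atTop, ‖w‖ < ρ n := hρtend.eventually (eventually_gt_nhds hw1)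
      obtain ⟨n, hn⟩ := this.exists
      exact mem_iUnion.2 ⟨n, by simpa [mem_ball, dist_zero_right] using hn⟩
  have h1 : Filter.Tendsto (fun n => ∫ w in ball (0:ℂ) (ρ n), G w) Filter.atTop
      (𝓝 (∫ w in ball (0:ℂ) 1, G w)) := by
    have := tendsto_setIntegral_of_monotone (s := fun n => ball (0:ℂ) (ρ n))
      (fun _ => measurableSet_ball) (fun m n hmn => ball_subset_ball (hρmono hmn))
      (by rw [hU]; exact hG_int)
    rwa [hU] at this
  have h2 : ∀ n, (∫ w in ball (0:ℂ) (ρ n), G w) = ((ρ n):ℂ)^2 * f (((ρ n):ℂ)^2 * z) := by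
    intro n
    exact subdisc f hf hz (hρ0 n) (hρ1 n)
  have h3 : Filter.Tendsto (fun n => ((ρ n):ℂ)^2 * f (((ρ n):ℂ)^2 * z)) Filter.atTop
      (𝓝 ((1:ℂ)^2 * f ((1:ℂ)^2 * z))) := by
    have hc : Filter.Tendsto (fun n => ((ρ n):ℂ)) Filter.atTop (𝓝 (1:ℂ)) := by
      exact (Complex.continuous_ofReal.tendsto 1).comp hρtend
    have hc2 : Filter.Tendsto (fun n => ((ρ n):ℂ)^2) Filter.atTop (𝓝 ((1:ℂ)^2)) := hc.pow 2
    have hcz : Filter.Tendsto (fun n => ((ρ n):ℂ)^2 * z) Filter.atTop (𝓝 ((1:ℂ)^2 * z)) :=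
      hc2.mul_const z
    have hfz : Filter.Tendsto (fun n => f (((ρ n):ℂ)^2 * z)) Filter.atTop (𝓝 (f ((1:ℂ)^2 * z))) := by
      have hfc : ContinuousAt f ((1:ℂ)^2 * z) := by
        apply (hf.differentiableAt _).continuousAt
        apply isOpen_ball.mem_nhds
        simpa using hz
      exact hfc.tendsto.comp hcz
    exact hc2.mul hfz
  have h4 : Filter.Tendsto (fun n => ∫ w in ball (0:ℂ) (ρ n), G w) Filter.atTop
      (𝓝 (f z)) := by
    simp only [h2]
    simpa using h3
  have := tendsto_nhds_unique h1 h4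
  exact this.symm
end
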